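/- For d = 2 and z = (z_1, z_2) ∈ ℂ² with Im(z_1), Im(z_2) > 0 and K > 0, the generalized Fourier transform of the basket put payoff P(x) = max(K − e^{x_1} − e^{x_2}, 0) equals P̂(z) = K^{1 − i(z_1+z_2)} Γ(−iz_1)Γ(−iz_2)/Γ(−i(z_1+z_2) + 2). -/

import Mathlib

open MeasureTheory Set

namespace BasketAux

lemma exp_cpow (x : ℝ) (w : ℂ) : ((Real.exp x : ℝ) : ℂ) ^ w = Complex.exp (w * x) := by
  rw [Complex.ofReal_exp, Complex.cpow_def_of_ne_zero (Complex.exp_ne_zero _),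
    Complex.log_exp (by simpa using Real.pi_pos) (by simpa using Real.pi_pos.le), mul_comm]

lemma intExp {σ : ℝ} (c : ℝ) (hσ : 0 < σ) :
    IntegrableOn (fun x : ℝ => Real.exp (σ * x)) (Iic c) := by
  have h1 : Integrable ((Iic (σ * c)).indicator Real.exp) :=
    (integrable_indicator_iff measurableSet_Iic).2 (integrableOn_exp_Iic (σ * c))
  have h2 : Integrable (fun x => (Iic (σ * c)).indicator Real.exp (σ * x)) :=
    (MeasureTheory.integrable_comp_mul_left_iff _ hσ.ne').2 h1
  have h3 : (fun x => (Iic (σ * c)).indicator Real.exp (σ * x))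
      = (Iic c).indicator (fun x => Real.exp (σ * x)) := by
    funext x
    by_cases h : x ≤ c
    · rw [indicator_of_mem (mem_Iic.2 ((mul_le_mul_iff_right₀ hσ).2 h)),
        indicator_of_mem (mem_Iic.2 h)]
    · rw [indicator_of_notMem (by simpa using fun hh => h ((mul_le_mul_iff_right₀ hσ).1 hh)),
        indicator_of_notMem (by simpa using h)]
  rw [h3] at h2
  exact (integrable_indicator_iff measurableSet_Iic).1 h2

lemma key (K : ℝ) (hK : 0 < K) (a v : ℂ) (ha : 0 < a.re) (hv : 0 < v.re) :
    (∫ x : ℝ, Complex.exp (a * x) * ((max (K - Real.exp x) 0 : ℝ) : ℂ) ^ v) =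
      (K : ℂ) ^ (a + v) * Complex.Gamma a * Complex.Gamma (v + 1) /
        Complex.Gamma (a + v + 1) := by
  have hvne : v ≠ 0 := by intro h; rw [h] at hv; simp at hv
  have hKc : (K : ℂ) ≠ 0 := by exact_mod_cast hK.ne'
  set g : ℝ → ℂ := fun s => ((s : ℝ) : ℂ) ^ (a - 1) * ((max (K - s) 0 : ℝ) : ℂ) ^ v with hg
  -- Step 1 : substitution s = exp x
  have himg : Real.exp '' univ = Ioi (0 : ℝ) := by rw [image_univ, Real.range_exp]
  have step1 : (∫ s in Ioi (0:ℝ), g s)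
      = ∫ x : ℝ, Complex.exp (a * x) * ((max (K - Real.exp x) 0 : ℝ) : ℂ) ^ v := by
    rw [← himg, integral_image_eq_integral_abs_deriv_smul MeasurableSet.univ
      (fun x _ => (Real.hasDerivAt_exp x).hasDerivWithinAt) Real.exp_injective.injOn g,
      setIntegral_univ]
    congr 1
    funext x
    rw [abs_of_pos (Real.exp_pos x), Complex.real_smul, hg]
    simp only
    rw [exp_cpow, Complex.ofReal_exp, ← mul_assoc, ← Complex.exp_add]
    congr 2
    ring
  -- Step 2 : truncate to (0, K)
  have step2 : (∫ s in Ioi (0:ℝ), g s)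
      = ∫ s in Ioo (0:ℝ) K, ((s : ℂ) ^ (a - 1) * (((K - s : ℝ)) : ℂ) ^ v) := by
    rw [← integral_indicator measurableSet_Ioi, ← integral_indicator measurableSet_Ioo]
    congr 1
    funext s
    by_cases h1 : s ∈ Ioo (0:ℝ) K
    · rw [indicator_of_mem (mem_Ioi.2 h1.1), indicator_of_mem h1, hg]
      simp only
      rw [max_eq_left (by linarith [h1.2] : (0:ℝ) ≤ K - s)]
    · by_cases h2 : s ∈ Ioi (0:ℝ)
      · have hs : K ≤ s := by
          by_contra hlt
          push_neg at hlt
          exact h1 ⟨mem_Ioi.1 h2, hlt⟩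
        rw [indicator_of_mem h2, indicator_of_notMem h1, hg]
        simp only
        rw [max_eq_right (by linarith : K - s ≤ 0), Complex.ofReal_zero,
          Complex.zero_cpow hvne, mul_zero]
      · rw [indicator_of_notMem h1, indicator_of_notMem h2]
  -- Step 3 : substitution s = K * t
  have himg2 : (K * ·) '' Ioo (0:ℝ) 1 = Ioo (0:ℝ) K := by
    rw [image_mul_left_Ioo hK]; simp
  have step3 : (∫ s in Ioo (0:ℝ) K, ((s : ℂ) ^ (a - 1) * (((K - s : ℝ)) : ℂ) ^ v))
      = ∫ t in Ioo (0:ℝ) 1,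
          (K : ℂ) ^ (a + v) * ((t : ℂ) ^ (a - 1) * (((1 - t : ℝ)) : ℂ) ^ v) := by
    rw [← himg2, integral_image_eq_integral_abs_deriv_smul measurableSet_Ioo
      (f' := fun _ => K)
      (fun t _ => by simpa using ((hasDerivAt_id t).const_mul K).hasDerivWithinAt)
      ((mul_right_injective₀ hK.ne').injOn) _]
    refine setIntegral_congr_fun measurableSet_Ioo (fun t ht => ?_)
    have h1 : ((K * t : ℝ) : ℂ) ^ (a - 1) = (K : ℂ) ^ (a - 1) * (t : ℂ) ^ (a - 1) := by
      rw [Complex.ofReal_mul]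
      exact Complex.mul_cpow_ofReal_nonneg hK.le ht.1.le _
    have h2 : ((K - K * t : ℝ) : ℂ) ^ v = (K : ℂ) ^ v * ((1 - t : ℝ) : ℂ) ^ v := by
      rw [show K - K * t = K * (1 - t) by ring, Complex.ofReal_mul]
      exact Complex.mul_cpow_ofReal_nonneg hK.le (by linarith [ht.2]) _
    rw [abs_of_pos hK, Complex.real_smul, h1, h2]
    have h3 : (K : ℂ) * ((K : ℂ) ^ (a - 1) * (K : ℂ) ^ v) = (K : ℂ) ^ (a + v) := by
      conv_rhs => rw [show a + v = 1 + (a - 1 + v) by ring, Complex.cpow_add _ _ hKc,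
        Complex.cpow_one]
      rw [← Complex.cpow_add _ _ hKc]
    calc (K : ℂ) * (((K : ℂ) ^ (a-1) * (t : ℂ) ^ (a-1)) * ((K : ℂ) ^ v * ((1 - t : ℝ) : ℂ) ^ v))
        = ((K : ℂ) * ((K : ℂ) ^ (a - 1) * (K : ℂ) ^ v)) *
            ((t : ℂ) ^ (a - 1) * ((1 - t : ℝ) : ℂ) ^ v) := by ring
      _ = _ := by rw [h3]
  -- Step 4 : beta integral
  have step4 : (∫ t in Ioo (0:ℝ) 1, ((t : ℂ) ^ (a - 1) * (((1 - t : ℝ)) : ℂ) ^ v))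
      = Complex.betaIntegral a (v + 1) := by
    rw [Complex.betaIntegral, intervalIntegral.integral_of_le zero_le_one,
      integral_Ioc_eq_integral_Ioo]
    congr 1
    funext t
    rw [Complex.ofReal_sub, Complex.ofReal_one, add_sub_cancel_right]
  have hv1 : 0 < (v + 1).re := by simp [Complex.add_re]; linarith
  have hbeta := Complex.Gamma_mul_Gamma_eq_betaIntegral ha hv1
  have hGne : Complex.Gamma (a + (v + 1)) ≠ 0 :=
    Complex.Gamma_ne_zero_of_re_pos (by simp [Complex.add_re]; linarith)
  rw [← step1, step2, step3, integral_const_mul, step4]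
  rw [show a + v + 1 = a + (v + 1) by ring]
  have hbeta' : Complex.betaIntegral a (v + 1)
      = Complex.Gamma a * Complex.Gamma (v + 1) / Complex.Gamma (a + (v + 1)) := by
    rw [eq_div_iff hGne]
    linear_combination -hbeta
  rw [hbeta']
  ring

end BasketAux

open BasketAux

/-- Generalized Fourier transform of the 2D basket put payoff. -/
theorem basket_put_transform_2d (K : ℝ) (hK : 0 < K) (z₁ z₂ : ℂ)
    (hz₁ : 0 < z₁.im) (hz₂ : 0 < z₂.im) :
    (∫ x : ℝ × ℝ,
        Complex.exp (-(Complex.I * (z₁ * (x.1 : ℂ) + z₂ * (x.2 : ℂ)))) *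
          (max (K - Real.exp x.1 - Real.exp x.2) 0 : ℝ)) =
      (K : ℂ) ^ ((1 : ℂ) - Complex.I * (z₁ + z₂)) *
        Complex.Gamma (-(Complex.I * z₁)) * Complex.Gamma (-(Complex.I * z₂)) /
        Complex.Gamma (-(Complex.I * (z₁ + z₂)) + 2) := by
  set w₁ := -(Complex.I * z₁) with hw₁
  set w₂ := -(Complex.I * z₂) with hw₂
  have hw₁re : 0 < w₁.re := by
    rw [hw₁]; simpa [Complex.mul_re] using hz₁
  have hw₂re : 0 < w₂.re := by
    rw [hw₂]; simpa [Complex.mul_re] using hz₂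
  set f : ℝ × ℝ → ℂ := fun x => Complex.exp (w₁ * x.1) *
    (Complex.exp (w₂ * x.2) * ((max (K - Real.exp x.1 - Real.exp x.2) 0 : ℝ) : ℂ)) with hf
  have hfun : ∀ x : ℝ × ℝ,
      Complex.exp (-(Complex.I * (z₁ * (x.1 : ℂ) + z₂ * (x.2 : ℂ)))) *
        ((max (K - Real.exp x.1 - Real.exp x.2) 0 : ℝ) : ℂ) = f x := by
    intro x
    rw [hf]
    simp only
    rw [← mul_assoc, ← Complex.exp_add]
    congr 2
    rw [hw₁, hw₂]
    ring
  have hcont : Continuous f := by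
    apply Continuous.mul
    · exact Complex.continuous_exp.comp
        (continuous_const.mul (Complex.continuous_ofReal.comp continuous_fst))
    apply Continuous.mul
    · exact Complex.continuous_exp.comp
        (continuous_const.mul (Complex.continuous_ofReal.comp continuous_snd))
    · exact Complex.continuous_ofReal.comp
        (((continuous_const.sub (Real.continuous_exp.comp continuous_fst)).sub
          (Real.continuous_exp.comp continuous_snd)).max continuous_const)
  set g : ℝ → ℝ := (Iic (Real.log K)).indicator (fun x => K * Real.exp (z₁.im * x)) with hgdef
  set h : ℝ → ℝ := (Iic (Real.log K)).indicator (fun x => Real.exp (z₂.im * x)) with hhdef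
  have hg : Integrable g :=
    (integrable_indicator_iff measurableSet_Iic).2 ((intExp _ hz₁).const_mul K)
  have hh : Integrable h :=
    (integrable_indicator_iff measurableSet_Iic).2 (intExp _ hz₂)
  have hgnn : ∀ x, 0 ≤ g x := by
    intro x
    rw [hgdef]
    exact indicator_nonneg (fun y _ => by positivity) x
  have hhnn : ∀ x, 0 ≤ h x := by
    intro x
    rw [hhdef]
    exact indicator_nonneg (fun y _ => by positivity) x
  have hbound : ∀ x : ℝ × ℝ, ‖f x‖ ≤ g x.1 * h x.2 := by
    intro x
    rw [hf]
    simp only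
    rw [norm_mul, norm_mul, Complex.norm_exp,
      Complex.norm_exp, Complex.norm_real, Real.norm_eq_abs]
    have hre1 : (w₁ * (x.1 : ℂ)).re = z₁.im * x.1 := by
      rw [hw₁]; simp [Complex.mul_re]
    have hre2 : (w₂ * (x.2 : ℂ)).re = z₂.im * x.2 := by
      rw [hw₂]; simp [Complex.mul_re]
    rw [hre1, hre2]
    by_cases hp : 0 < K - Real.exp x.1 - Real.exp x.2
    · have hx1 : x.1 ≤ Real.log K := by
        have : Real.exp x.1 < K := by linarith [Real.exp_pos x.2]
        exact ((Real.lt_log_iff_exp_lt hK).2 this).le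
      have hx2 : x.2 ≤ Real.log K := by
        have : Real.exp x.2 < K := by linarith [Real.exp_pos x.1]
        exact ((Real.lt_log_iff_exp_lt hK).2 this).le
      rw [hgdef, hhdef, indicator_of_mem (mem_Iic.2 hx1), indicator_of_mem (mem_Iic.2 hx2)]
      rw [abs_of_pos (lt_max_of_lt_left hp)]
      rw [max_eq_left hp.le]
      have h1 : K - Real.exp x.1 - Real.exp x.2 ≤ K := by
        linarith [Real.exp_pos x.1, Real.exp_pos x.2]
      have e1 := Real.exp_pos (z₁.im * x.1)
      have e2 := Real.exp_pos (z₂.im * x.2)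
      have h2 := mul_le_mul_of_nonneg_left (mul_le_mul_of_nonneg_left h1 e2.le) e1.le
      exact h2.trans (le_of_eq (by ring))
    · rw [max_eq_right (by linarith : K - Real.exp x.1 - Real.exp x.2 ≤ 0)]
      simp only [abs_zero, mul_zero]
      exact mul_nonneg (hgnn x.1) (hhnn x.2)
  have hint : Integrable f ((volume : Measure ℝ).prod volume) := by
    refine Integrable.mono' (hg.mul_prod hh) ?_ (ae_of_all _ hbound)
    exact hcont.aestronglyMeasurable
  have hinner : ∀ x₁ : ℝ, (∫ x₂ : ℝ, f (x₁, x₂))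
      = Complex.exp (w₁ * x₁) *
        (((max (K - Real.exp x₁) 0 : ℝ) : ℂ) ^ (w₂ + 1) *
          (Complex.Gamma w₂ / Complex.Gamma (w₂ + 2))) := by
    intro x₁
    rw [hf]
    simp only
    rw [integral_const_mul]
    congr 1
    by_cases hM : Real.exp x₁ < K
    · have hMpos : 0 < K - Real.exp x₁ := by linarith
      have hkey := key (K - Real.exp x₁) hMpos w₂ 1 hw₂re (by norm_num)
      simp only [Complex.cpow_one] at hkey
      have harg : ∀ x₂ : ℝ, K - Real.exp x₁ - Real.exp x₂ = (K - Real.exp x₁) - Real.exp x₂ :=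
        fun _ => rfl
      rw [show (∫ x₂ : ℝ, Complex.exp (w₂ * x₂) *
          ((max (K - Real.exp x₁ - Real.exp x₂) 0 : ℝ) : ℂ))
          = ∫ x₂ : ℝ, Complex.exp (w₂ * x₂) *
          ((max ((K - Real.exp x₁) - Real.exp x₂) 0 : ℝ) : ℂ) from rfl, hkey]
      rw [max_eq_left hMpos.le]
      rw [show w₂ + 1 + 1 = w₂ + 2 by ring]
      rw [show Complex.Gamma (1 + 1) = 1 by
        rw [Complex.Gamma_add_one 1 one_ne_zero, Complex.Gamma_one, mul_one]]
      ring
    · have h0 : ∀ x₂ : ℝ, max (K - Real.exp x₁ - Real.exp x₂) 0 = 0 := fun x₂ =>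
        max_eq_right (by nlinarith [Real.exp_pos x₂, not_lt.mp hM] :
          K - Real.exp x₁ - Real.exp x₂ ≤ 0)
      simp only [h0, Complex.ofReal_zero, mul_zero, integral_zero]
      rw [max_eq_right (by linarith [not_lt.mp hM] : K - Real.exp x₁ ≤ 0),
        Complex.ofReal_zero, Complex.zero_cpow, zero_mul]
      intro hcontra
      have : (w₂ + 1).re = 0 := by rw [hcontra]; simp
      rw [Complex.add_re, Complex.one_re] at this
      linarith
  calc (∫ x : ℝ × ℝ,
        Complex.exp (-(Complex.I * (z₁ * (x.1 : ℂ) + z₂ * (x.2 : ℂ)))) *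
          ((max (K - Real.exp x.1 - Real.exp x.2) 0 : ℝ) : ℂ))
      = ∫ x : ℝ × ℝ, f x := by
        exact integral_congr_ae (ae_of_all _ hfun)
    _ = ∫ x₁ : ℝ, ∫ x₂ : ℝ, f (x₁, x₂) := by
        rw [MeasureTheory.Measure.volume_eq_prod, MeasureTheory.integral_prod f hint]
    _ = (∫ x₁ : ℝ, Complex.exp (w₁ * x₁) *
          ((max (K - Real.exp x₁) 0 : ℝ) : ℂ) ^ (w₂ + 1)) *
          (Complex.Gamma w₂ / Complex.Gamma (w₂ + 2)) := by
        rw [← integral_mul_const]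
        refine integral_congr_ae (ae_of_all _ (fun x₁ => ?_))
        beta_reduce
        rw [hinner x₁]
        ring
    _ = (K : ℂ) ^ (w₁ + (w₂ + 1)) * Complex.Gamma w₁ * Complex.Gamma (w₂ + 1 + 1) /
          Complex.Gamma (w₁ + (w₂ + 1) + 1) *
          (Complex.Gamma w₂ / Complex.Gamma (w₂ + 2)) := by
        rw [key K hK w₁ (w₂ + 1) hw₁re (by rw [Complex.add_re, Complex.one_re]; linarith)]
    _ = (K : ℂ) ^ ((1 : ℂ) - Complex.I * (z₁ + z₂)) *
        Complex.Gamma w₁ * Complex.Gamma w₂ /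
        Complex.Gamma (-(Complex.I * (z₁ + z₂)) + 2) := by
        rw [show w₁ + (w₂ + 1) + 1 = -(Complex.I * (z₁ + z₂)) + 2 by rw [hw₁, hw₂]; ring,
          show w₂ + 1 + 1 = w₂ + 2 by ring,
          show w₁ + (w₂ + 1) = (1 : ℂ) - Complex.I * (z₁ + z₂) by rw [hw₁, hw₂]; ring]
        have hne2 : Complex.Gamma (w₂ + 2) ≠ 0 :=
          Complex.Gamma_ne_zero_of_re_pos (by rw [Complex.add_re]; norm_num; linarith)
        have hne3 : Complex.Gamma (-(Complex.I * (z₁ + z₂)) + 2) ≠ 0 := by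
          apply Complex.Gamma_ne_zero_of_re_pos
          rw [Complex.add_re, Complex.neg_re, Complex.mul_re]
          simp [Complex.add_im]
          linarith
        field_simp
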